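/- Let F be a number-conserving one-dimensional CA with finite state set S ⊂ ℤ and neighborhood of size n. Then F is a sub-automaton of a number-conserving CA F̃ whose state set is the full interval {0, 1, ..., max S − min S} and whose neighborhood has size 2n. -/

import Mathlib

open Finset

/-- Global map of a 1D CA: the local rule `f` is applied to the window of `c` around each cell. -/
def glob (f : (ℤ → ℤ) → ℤ) (c : ℤ → ℤ) : ℤ → ℤ := fun i => f (fun j => c (i + j))

/-- A configuration over state set `S`. -/
def Config (S : Finset ℤ) (c : ℤ → ℤ) : Prop := ∀ i, c i ∈ S

/-- `p` is a (spatial) period of `c`. -/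
def Per (p : ℕ) (c : ℤ → ℤ) : Prop := ∀ i : ℤ, c (i + (p : ℤ)) = c i

/-- The local rule only depends on the neighborhood `{-l,...,r}`. -/
def LocalRule (l r : ℕ) (f : (ℤ → ℤ) → ℤ) : Prop :=
  ∀ c d : ℤ → ℤ, (∀ j : ℤ, -(l : ℤ) ≤ j → j ≤ (r : ℤ) → c j = d j) → f c = f d

/-- The rule maps `S`-configurations to states in `S`. -/
def Closed (S : Finset ℤ) (f : (ℤ → ℤ) → ℤ) : Prop :=
  ∀ c, Config S c → f c ∈ S

/-- Number conservation: the sum over one period of any spatially periodic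
configuration is preserved by the global map. -/
def NC (S : Finset ℤ) (f : (ℤ → ℤ) → ℤ) : Prop :=
  ∀ c : ℤ → ℤ, Config S c → ∀ p : ℕ, 0 < p → Per p c →
    ∑ k ∈ Finset.range p, glob f c (k : ℤ) = ∑ k ∈ Finset.range p, c (k : ℤ)

namespace NCExt

/-! ### Generic helpers -/

lemma getD_tail (x : List ℤ) (i : ℕ) : x.tail.getD i 0 = x.getD (i+1) 0 := by
  cases x <;> simp [List.getD_cons_succ]

lemma getD_dropLast (x : List ℤ) (i : ℕ) (h : i + 1 < x.length) :
    x.dropLast.getD i 0 = x.getD i 0 := by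
  have h1 : i < x.dropLast.length := by
    rw [List.length_dropLast]; omega
  rw [List.getD_eq_getElem _ _ h1, List.getD_eq_getElem _ _ (by omega : i < x.length)]
  exact List.getElem_dropLast h1

lemma getD_map_range (h : ℕ → ℤ) (k i : ℕ) (hik : i < k) :
    ((List.range k).map h).getD i 0 = h i := by
  have hlen : i < ((List.range k).map h).length := by simpa using hik
  rw [List.getD_eq_getElem _ _ hlen]
  simp

lemma sum_getD (w : List ℤ) : ∑ i ∈ Finset.range w.length, w.getD i 0 = w.sum := by
  induction w with
  | nil => simp
  | cons a w ih =>
    rw [List.length_cons, Finset.sum_range_succ']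
    simp only [List.getD_cons_succ, List.getD_cons_zero, ih, List.sum_cons]
    ring

lemma concat_getD (x : List ℤ) (hne : x ≠ []) :
    x.dropLast ++ [x.getD (x.length - 1) 0] = x := by
  have h1 := List.dropLast_append_getLast hne
  have h2 : x.getLast hne = x.getD (x.length - 1) 0 := by
    rw [List.getLast_eq_getElem, List.getD_eq_getElem _ _ (by
      have := List.length_pos_iff.mpr hne; omega)]
  rw [← h2, h1]

lemma head_getD_tail (x : List ℤ) (hne : x ≠ []) : x.getD 0 0 :: x.tail = x := by
  cases x with
  | nil => exact absurd rfl hne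
  | cons a t => simp

/-! ### Sums over periodic configurations -/

lemma per_shift (p : ℕ) (c : ℤ → ℤ) (hc : Per p c) (s : ℤ) :
    Per p (fun x => c (x + s)) := by
  intro j
  simp only
  rw [show j + (p:ℤ) + s = (j + s) + p from by ring, hc]

lemma glob_per (f : (ℤ → ℤ) → ℤ) (p : ℕ) (c : ℤ → ℤ) (hc : Per p c) :
    Per p (glob f c) := by
  intro i
  show f _ = f _
  refine congrArg f (funext fun j => ?_)
  rw [show i + (p:ℤ) + j = (i + j) + p from by ring, hc]

lemma shift1 (p : ℕ) (c : ℤ → ℤ) (hc : Per p c) :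
    ∑ k ∈ Finset.range p, c ((k:ℤ) + 1) = ∑ k ∈ Finset.range p, c (k:ℤ) := by
  have h1 := Finset.sum_range_succ (fun k : ℕ => c (k:ℤ)) p
  have h2 := Finset.sum_range_succ' (fun k : ℕ => c (k:ℤ)) p
  have h3 : c (p:ℤ) = c 0 := by have := hc 0; rwa [zero_add] at this
  have h4 : ∑ k ∈ Finset.range p, c ((k:ℤ)+1) = ∑ k ∈ Finset.range p, c ((k+1 : ℕ):ℤ) :=
    Finset.sum_congr rfl (fun k _ => congrArg c (by push_cast; ring))
  rw [h4]
  have : ∑ k ∈ Finset.range p, c ((k+1 : ℕ):ℤ) + c ((0:ℕ):ℤ) = ∑ k ∈ Finset.range p, c (k:ℤ) + c (p:ℤ) := by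
    rw [← h2, ← h1]
  push_cast at this ⊢
  linarith [this, h3]

lemma per_sum_shift (p : ℕ) (c : ℤ → ℤ) (hc : Per p c) (t : ℤ) :
    ∑ k ∈ Finset.range p, c ((k:ℤ) + t) = ∑ k ∈ Finset.range p, c (k:ℤ) := by
  induction t using Int.induction_on with
  | zero => simp
  | succ i ih =>
    have hP := per_shift p c hc i
    have hs := shift1 p _ hP
    calc ∑ k ∈ Finset.range p, c ((k:ℤ) + ((i:ℤ)+1))
        = ∑ k ∈ Finset.range p, (fun x => c (x + (i:ℤ))) ((k:ℤ)+1) :=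
          Finset.sum_congr rfl (fun k _ => congrArg c (by ring))
      _ = ∑ k ∈ Finset.range p, c ((k:ℤ) + (i:ℤ)) := hs
      _ = _ := ih
  | pred i ih =>
    have hP := per_shift p c hc (-(i:ℤ) - 1)
    have hs := shift1 p _ hP
    have h6 : ∑ k ∈ Finset.range p, c ((k:ℤ) + -(i:ℤ)) =
        ∑ k ∈ Finset.range p, c ((k:ℤ) + (-(i:ℤ)-1)) := by
      calc ∑ k ∈ Finset.range p, c ((k:ℤ) + -(i:ℤ))
          = ∑ k ∈ Finset.range p, (fun x => c (x + (-(i:ℤ)-1))) ((k:ℤ)+1) :=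
            Finset.sum_congr rfl (fun k _ => congrArg c (by ring))
        _ = _ := hs
    rw [← h6]; exact ih

/-! ### Padded configurations from words -/

/-- The configuration given by a word placed on `[0, w.length)`, zero elsewhere. -/
def cfg (w : List ℤ) : ℤ → ℤ := fun j => if j < 0 then 0 else w.getD j.toNat 0

lemma cfg_neg (w : List ℤ) (j : ℤ) (h : j < 0) : cfg w j = 0 := if_pos h

lemma cfg_nonneg (w : List ℤ) (j : ℤ) (h : 0 ≤ j) : cfg w j = w.getD j.toNat 0 :=
  if_neg (not_lt.mpr h)

lemma cfg_nat (w : List ℤ) (k : ℕ) : cfg w (k:ℤ) = w.getD k 0 := by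
  rw [cfg_nonneg w _ (Int.natCast_nonneg k), Int.toNat_natCast]

lemma cfg_big (w : List ℤ) (j : ℤ) (h : (w.length : ℤ) ≤ j) : cfg w j = 0 := by
  rw [cfg_nonneg w _ (le_trans (Int.natCast_nonneg _) h)]
  exact List.getD_eq_default _ _ (by omega)

lemma cfg_mem (S : Finset ℤ) (h0 : (0:ℤ) ∈ S) (w : List ℤ) (hw : ∀ q ∈ w, q ∈ S) :
    Config S (cfg w) := by
  intro j
  by_cases h : j < 0
  · rw [cfg_neg w j h]; exact h0
  · rw [cfg_nonneg w j (not_lt.mp h)]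
    by_cases h2 : j.toNat < w.length
    · rw [List.getD_eq_getElem _ _ h2]
      exact hw _ (List.getElem_mem h2)
    · rw [List.getD_eq_default _ _ (by omega)]; exact h0

lemma cfg_dropLast (x : List ℤ) (q : ℤ) (h : q < (x.length : ℤ) - 1) :
    cfg x.dropLast q = cfg x q := by
  by_cases hq : q < 0
  · rw [cfg_neg _ _ hq, cfg_neg _ _ hq]
  · push_neg at hq
    rw [cfg_nonneg _ _ hq, cfg_nonneg _ _ hq]
    exact getD_dropLast x q.toNat (by omega)

lemma cfg_tail (x : List ℤ) (q : ℤ) (h : 0 ≤ q) : cfg x.tail q = cfg x (q + 1) := by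
  rw [cfg_nonneg _ _ h, cfg_nonneg _ _ (by omega), getD_tail]
  congr 1
  omega

/-! ### glob helpers -/

lemma glob_eq (f : (ℤ → ℤ) → ℤ) (c : ℤ → ℤ) (i : ℤ) : glob f c i = f (fun j => c (i + j)) := rfl

lemma glob_congr {l r : ℕ} {f : (ℤ → ℤ) → ℤ} (hl : LocalRule l r f) {c d : ℤ → ℤ} {i i' : ℤ}
    (h : ∀ t : ℤ, -(l:ℤ) ≤ t → t ≤ (r:ℤ) → c (i + t) = d (i' + t)) :
    glob f c i = glob f d i' :=
  hl _ _ h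

lemma glob_mem {S : Finset ℤ} {f : (ℤ → ℤ) → ℤ} (hC : Closed S f) {c : ℤ → ℤ}
    (hc : Config S c) (i : ℤ) : glob f c i ∈ S :=
  hC _ (fun j => hc (i + j))

lemma rule_zero {S : Finset ℤ} {f : (ℤ → ℤ) → ℤ} (hNC : NC S f) (h0 : (0:ℤ) ∈ S) :
    f (fun _ => 0) = 0 := by
  have h := hNC (fun _ => 0) (fun _ => h0) 1 one_pos (fun _ => rfl)
  simpa [glob, Finset.sum_range_one] using h

lemma glob_zero {S : Finset ℤ} {l r : ℕ} {f : (ℤ → ℤ) → ℤ}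
    (hl : LocalRule l r f) (hNC : NC S f) (h0 : (0:ℤ) ∈ S)
    {c : ℤ → ℤ} {i : ℤ} (h : ∀ t : ℤ, -(l:ℤ) ≤ t → t ≤ (r:ℤ) → c (i + t) = 0) :
    glob f c i = 0 := by
  have h1 : glob f c i = glob f (fun _ => (0:ℤ)) 0 :=
    glob_congr hl (fun t ht1 ht2 => h t ht1 ht2)
  rw [h1, glob_eq]
  exact rule_zero hNC h0

/-! ### The basic flux potential `A` -/

/-- Potential of a word: sum of the images under `f` of the padded word,
over the cells `l, …, l + (l+r) - 1`. -/
def A (f : (ℤ → ℤ) → ℤ) (l r : ℕ) (w : List ℤ) : ℤ :=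
  ∑ i ∈ Finset.range (l + r), glob f (cfg w) ((l:ℤ) + (i:ℤ))

section Flux

variable {S : Finset ℤ} {l r : ℕ} {f : (ℤ → ℤ) → ℤ}

lemma sum_lemma (h0 : (0:ℤ) ∈ S) (hl : LocalRule l r f) (hNC : NC S f)
    (w : List ℤ) (hw : ∀ q ∈ w, q ∈ S) :
    ∑ j ∈ Finset.range (w.length + (l + r) + 1), glob f (cfg w) ((j:ℤ) - (r:ℤ)) = w.sum := by
  set P : ℕ := w.length + (l + r) + 1 with hPdef
  have hPz : (P:ℤ) = (w.length:ℤ) + l + r + 1 := by rw [hPdef]; push_cast; ring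
  have hPpos : 0 < P := by omega
  set per : ℤ → ℤ := fun j => cfg w (j % (P:ℤ)) with hper
  have hcw : Config S (cfg w) := cfg_mem S h0 w hw
  have hcper : Config S per := fun i => hcw _
  have hmodadd : ∀ q : ℤ, (q + (P:ℤ)) % (P:ℤ) = q % (P:ℤ) := by
    intro q
    rw [show q + (P:ℤ) = q + (P:ℤ) * 1 from by ring, Int.add_mul_emod_self_left]
  have hperiod : Per P per := by
    intro i
    show cfg w ((i + (P:ℤ)) % (P:ℤ)) = cfg w (i % (P:ℤ))
    rw [hmodadd]
  have hnc := hNC per hcper P hPpos hperiod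
  have hrhs : ∑ k ∈ Finset.range P, per (k:ℤ) = w.sum := by
    have he : ∀ k ∈ Finset.range P, per (k:ℤ) = w.getD k 0 := by
      intro k hk
      show cfg w ((k:ℤ) % (P:ℤ)) = w.getD k 0
      rw [Int.emod_eq_of_lt (Int.natCast_nonneg k) (by exact_mod_cast Finset.mem_range.mp hk)]
      exact cfg_nat w k
    rw [Finset.sum_congr rfl he]
    rw [show P = w.length + ((l+r)+1) from by omega, Finset.sum_range_add]
    have hz : ∑ i ∈ Finset.range ((l+r)+1), w.getD (w.length + i) 0 = 0 :=
      Finset.sum_eq_zero (fun i _ => List.getD_eq_default _ _ (by omega))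
    rw [hz, add_zero, sum_getD]
  have hgper : Per P (glob f per) := glob_per f P per hperiod
  have hshift := per_sum_shift P (glob f per) hgper (-(r:ℤ))
  have hterm : ∀ k ∈ Finset.range P, glob f per ((k:ℤ) + (-(r:ℤ))) = glob f (cfg w) ((k:ℤ) - (r:ℤ)) := by
    intro k hk
    have hkP : (k:ℤ) < (P:ℤ) := by exact_mod_cast Finset.mem_range.mp hk
    have h1 : glob f per ((k:ℤ) + (-(r:ℤ))) = glob f per ((k:ℤ) - (r:ℤ)) :=
      congrArg (glob f per) (by ring)
    rw [h1]
    refine glob_congr hl (fun t ht1 ht2 => ?_)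
    set q : ℤ := (k:ℤ) - (r:ℤ) + t with hq
    have hk0 : (0:ℤ) ≤ k := Int.natCast_nonneg k
    by_cases hq0 : 0 ≤ q
    · have hqP : q < (P:ℤ) := by omega
      show cfg w (q % (P:ℤ)) = cfg w q
      rw [Int.emod_eq_of_lt hq0 hqP]
    · push_neg at hq0
      have hqlb : -((l:ℤ) + r) ≤ q := by omega
      have h2 : q % (P:ℤ) = q + (P:ℤ) := by
        rw [← hmodadd q]
        exact Int.emod_eq_of_lt (by omega) (by omega)
      show cfg w (q % (P:ℤ)) = cfg w q
      rw [h2, cfg_big w _ (by omega), cfg_neg w _ hq0]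
  calc ∑ j ∈ Finset.range P, glob f (cfg w) ((j:ℤ) - (r:ℤ))
      = ∑ j ∈ Finset.range P, glob f per ((j:ℤ) + (-(r:ℤ))) := (Finset.sum_congr rfl hterm).symm
    _ = ∑ j ∈ Finset.range P, glob f per (j:ℤ) := hshift
    _ = ∑ j ∈ Finset.range P, per (j:ℤ) := hnc
    _ = w.sum := hrhs

/-- The flux identity: the rule is determined by the potential `A`. -/
lemma key1 (h0 : (0:ℤ) ∈ S) (hl : LocalRule l r f) (hNC : NC S f)
    (x : List ℤ) (hxlen : x.length = l + r + 1) (hx : ∀ q ∈ x, q ∈ S) :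
    glob f (cfg x) (l:ℤ) = x.getD (l+r) 0 + A f l r x.dropLast - A f l r x.tail := by
  have hxne : x ≠ [] := by
    intro h; rw [h] at hxlen; simp at hxlen
  have htl : x.tail.length = l + r := by rw [List.length_tail, hxlen]; omega
  have hdl : x.dropLast.length = l + r := by rw [List.length_dropLast, hxlen]; omega
  have hI := sum_lemma h0 hl hNC x hx
  have hII := sum_lemma h0 hl hNC x.dropLast (fun q hq => hx q (List.mem_of_mem_dropLast hq))
  rw [hxlen] at hI
  rw [hdl] at hII
  rw [show l + r + 1 + (l + r) + 1 = (l+r) + ((l+r) + 2) from by omega,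
    Finset.sum_range_add, Finset.sum_range_succ'] at hI
  rw [show l + r + (l + r) + 1 = (l+r) + ((l+r) + 1) from by omega,
    Finset.sum_range_add] at hII
  -- first chunks agree
  have e1 : ∑ j ∈ Finset.range (l+r), glob f (cfg x) ((j:ℤ) - (r:ℤ))
      = ∑ j ∈ Finset.range (l+r), glob f (cfg x.dropLast) ((j:ℤ) - (r:ℤ)) := by
    refine Finset.sum_congr rfl (fun j hj => ?_)
    have hjr : (j:ℤ) < (l:ℤ) + r := by exact_mod_cast Finset.mem_range.mp hj
    refine glob_congr hl (fun t ht1 ht2 => ?_)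
    exact (cfg_dropLast x _ (by rw [hxlen]; push_cast; omega)).symm
  -- middle term of hI is the value of f
  have e2 : glob f (cfg x) ((((l+r) + 0 : ℕ):ℤ) - (r:ℤ)) = glob f (cfg x) (l:ℤ) :=
    congrArg (glob f (cfg x)) (by push_cast; ring)
  -- third chunk of hI
  have e3 : ∑ j ∈ Finset.range ((l+r)+1), glob f (cfg x) ((((l+r) + (j+1) : ℕ):ℤ) - (r:ℤ))
      = ∑ j ∈ Finset.range ((l+r)+1), glob f (cfg x.tail) ((l:ℤ) + (j:ℤ)) := by
    refine Finset.sum_congr rfl (fun j hj => ?_)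
    refine glob_congr hl (fun t ht1 ht2 => ?_)
    have hq0 : (0:ℤ) ≤ (l:ℤ) + j + t := by
      have : (0:ℤ) ≤ (j:ℤ) := Int.natCast_nonneg j
      omega
    rw [cfg_tail x _ hq0]
    refine congrArg (cfg x) ?_
    push_cast
    ring
  have e4 : ∑ j ∈ Finset.range ((l+r)+1), glob f (cfg x.tail) ((l:ℤ) + (j:ℤ))
      = A f l r x.tail := by
    rw [Finset.sum_range_succ]
    have hz : glob f (cfg x.tail) ((l:ℤ) + ((l+r : ℕ):ℤ)) = 0 := by
      refine glob_zero hl hNC h0 (fun t ht1 ht2 => ?_)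
      refine cfg_big x.tail _ ?_
      rw [htl]
      push_cast
      omega
    rw [hz, add_zero]
    rfl
  -- second chunk of hII
  have e5 : ∑ j ∈ Finset.range ((l+r)+1), glob f (cfg x.dropLast) ((((l+r) + j : ℕ):ℤ) - (r:ℤ))
      = A f l r x.dropLast := by
    have ec : ∀ j ∈ Finset.range ((l+r)+1),
        glob f (cfg x.dropLast) ((((l+r) + j : ℕ):ℤ) - (r:ℤ))
          = glob f (cfg x.dropLast) ((l:ℤ) + (j:ℤ)) :=
      fun j _ => congrArg (glob f (cfg x.dropLast)) (by push_cast; ring)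
    rw [Finset.sum_congr rfl ec, Finset.sum_range_succ]
    have hz : glob f (cfg x.dropLast) ((l:ℤ) + ((l+r : ℕ):ℤ)) = 0 := by
      refine glob_zero hl hNC h0 (fun t ht1 ht2 => ?_)
      refine cfg_big x.dropLast _ ?_
      rw [hdl]
      push_cast
      omega
    rw [hz, add_zero]
    rfl
  have hsum : x.sum = x.dropLast.sum + x.getD (l+r) 0 := by
    conv_lhs => rw [← concat_getD x hxne]
    rw [List.sum_append, List.sum_cons, List.sum_nil, hxlen]
    norm_num
  rw [e1, e2] at hI
  rw [e3, e4] at hI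
  rw [e5] at hII
  -- hI : C1 + (A tail + glob f (cfg x) l) = x.sum
  -- hII : C1 + A dropLast = x.dropLast.sum
  linarith [hI, hII, hsum]

end Flux


/-! ### Rounding into `S` -/

/-- Largest element of `S` that is `≤ q` (for `q ≥ 0`, assuming `0 ∈ S`). -/
def lo (S : Finset ℤ) (q : ℤ) : ℤ :=
  if h : (S.filter (fun s => s ≤ q)).Nonempty then (S.filter (fun s => s ≤ q)).max' h else 0

/-- Smallest element of `S` that is `≥ q` (for `q ≤ K`, assuming `K ∈ S`). -/
def hi (S : Finset ℤ) (q : ℤ) : ℤ :=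
  if h : (S.filter (fun s => q ≤ s)).Nonempty then (S.filter (fun s => q ≤ s)).min' h else 0

lemma lo_spec (S : Finset ℤ) (h0 : (0:ℤ) ∈ S) (q : ℤ) (hq : 0 ≤ q) :
    lo S q ∈ S ∧ lo S q ≤ q := by
  have hne : (S.filter (fun s => s ≤ q)).Nonempty := ⟨0, Finset.mem_filter.mpr ⟨h0, hq⟩⟩
  rw [lo, dif_pos hne]
  have h := Finset.max'_mem _ hne
  rw [Finset.mem_filter] at h
  exact h

lemma lo_fix (S : Finset ℤ) (q : ℤ) (hq : q ∈ S) : lo S q = q := by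
  have hqf : q ∈ S.filter (fun s => s ≤ q) := Finset.mem_filter.mpr ⟨hq, le_refl q⟩
  have hne : (S.filter (fun s => s ≤ q)).Nonempty := ⟨q, hqf⟩
  rw [lo, dif_pos hne]
  have h1 := Finset.max'_mem _ hne
  rw [Finset.mem_filter] at h1
  exact le_antisymm h1.2 (Finset.le_max' _ _ hqf)

lemma hi_spec (S : Finset ℤ) {K : ℤ} (hK : K ∈ S) (q : ℤ) (hq : q ≤ K) :
    hi S q ∈ S ∧ q ≤ hi S q := by
  have hne : (S.filter (fun s => q ≤ s)).Nonempty := ⟨K, Finset.mem_filter.mpr ⟨hK, hq⟩⟩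
  rw [hi, dif_pos hne]
  have h := Finset.min'_mem _ hne
  rw [Finset.mem_filter] at h
  exact h

lemma hi_fix (S : Finset ℤ) (q : ℤ) (hq : q ∈ S) : hi S q = q := by
  have hqf : q ∈ S.filter (fun s => q ≤ s) := Finset.mem_filter.mpr ⟨hq, le_refl q⟩
  have hne : (S.filter (fun s => q ≤ s)).Nonempty := ⟨q, hqf⟩
  rw [hi, dif_pos hne]
  have h1 := Finset.min'_mem _ hne
  rw [Finset.mem_filter] at h1
  exact le_antisymm (Finset.min'_le _ _ hqf) h1.2

lemma getD_map (g : ℤ → ℤ) (w : List ℤ) (i : ℕ) (h : i < w.length) :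
    (w.map g).getD i 0 = g (w.getD i 0) := by
  rw [List.getD_eq_getElem _ _ (by simpa using h), List.getD_eq_getElem _ _ h]
  simp

lemma map_lo_mem (S : Finset ℤ) (h0 : (0:ℤ) ∈ S) (w : List ℤ) (hw : ∀ q ∈ w, 0 ≤ q) :
    ∀ q ∈ w.map (lo S), q ∈ S := by
  intro q hq
  obtain ⟨a, haw, rfl⟩ := List.mem_map.mp hq
  exact (lo_spec S h0 a (hw a haw)).1

lemma map_lo_sum_le (S : Finset ℤ) (h0 : (0:ℤ) ∈ S) (w : List ℤ) (hw : ∀ q ∈ w, 0 ≤ q) :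
    (w.map (lo S)).sum ≤ w.sum := by
  induction w with
  | nil => simp
  | cons a t ih =>
    simp only [List.map_cons, List.sum_cons]
    have h1 := (lo_spec S h0 a (hw a (by simp))).2
    have h2 := ih (fun q hq => hw q (by simp [hq]))
    linarith

lemma map_lo_id (S : Finset ℤ) (v : List ℤ) (hv : ∀ q ∈ v, q ∈ S) :
    v.map (lo S) = v := by
  have h := List.map_congr_left (f := lo S) (g := id) (fun a ha => lo_fix S a (hv a ha))
  rw [h, List.map_id]

/-! ### Chains: paths from rounded words, defining the extension potential -/

inductive chain (S : Finset ℤ) (l r : ℕ) (f : (ℤ → ℤ) → ℤ) (K : ℤ) : List ℤ → ℤ → Prop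
  | base (w : List ℤ) (h₁ : w.length = l + r) (h₂ : ∀ q ∈ w, 0 ≤ q ∧ q ≤ K) :
      chain S l r f K w (A f l r (w.map (lo S)) + (w.sum - (w.map (lo S)).sum))
  | fwd (w : List ℤ) (c a : ℤ) (h : chain S l r f K w c) (ha0 : 0 ≤ a) (haK : a ≤ K) :
      chain S l r f K ((w ++ [a]).tail) (c + a)
  | bwd (w : List ℤ) (c b : ℤ) (h : chain S l r f K w c) (hb0 : 0 ≤ b) (hbK : b ≤ K) :
      chain S l r f K ((b :: w).dropLast) (c + (K - (b :: w).getD (l + r) 0))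

/-- Extension of the potential `A` to arbitrary words, via least chain cost. -/
noncomputable def Phi (S : Finset ℤ) (l r : ℕ) (f : (ℤ → ℤ) → ℤ) (K : ℤ) (w : List ℤ) : ℤ :=
  sInf {c | chain S l r f K w c}

section Ext

variable {S : Finset ℤ} {l r : ℕ} {f : (ℤ → ℤ) → ℤ} {K : ℤ}

lemma A_nonneg (h0 : (0:ℤ) ∈ S) (hSK : ∀ s ∈ S, 0 ≤ s ∧ s ≤ K) (hC : Closed S f)
    (v : List ℤ) (hv : ∀ q ∈ v, q ∈ S) : 0 ≤ A f l r v := by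
  refine Finset.sum_nonneg (fun i _ => ?_)
  exact (hSK _ (glob_mem hC (cfg_mem S h0 v hv) _)).1

lemma E1 (h0 : (0:ℤ) ∈ S) (hSK : ∀ s ∈ S, 0 ≤ s ∧ s ≤ K)
    (hl : LocalRule l r f) (hC : Closed S f) (hNC : NC S f)
    (s : List ℤ) (hs : s.length = l + r) (hsS : ∀ q ∈ s, q ∈ S) (a : ℤ) (ha : a ∈ S) :
    A f l r ((s ++ [a]).tail) ≤ A f l r s + a := by
  have hxlen : (s ++ [a]).length = l + r + 1 := by simp [hs]
  have hx : ∀ q ∈ s ++ [a], q ∈ S := by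
    intro q hq
    rcases List.mem_append.mp hq with h | h
    · exact hsS q h
    · simp at h; subst h; exact ha
  have h1 := key1 h0 hl hNC (s ++ [a]) hxlen hx
  have h2 : (0:ℤ) ≤ glob f (cfg (s ++ [a])) (l:ℤ) :=
    (hSK _ (glob_mem hC (cfg_mem S h0 _ hx) _)).1
  have h3 : (s ++ [a]).getD (l+r) 0 = a := by
    rw [List.getD_append_right _ _ _ _ (by omega), hs]
    simp
  have h4 : (s ++ [a]).dropLast = s := List.dropLast_concat
  rw [h3, h4] at h1
  linarith

lemma E2 (h0 : (0:ℤ) ∈ S) (hSK : ∀ s ∈ S, 0 ≤ s ∧ s ≤ K)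
    (hl : LocalRule l r f) (hC : Closed S f) (hNC : NC S f)
    (s : List ℤ) (hs : s.length = l + r) (hsS : ∀ q ∈ s, q ∈ S) (b : ℤ) (hb : b ∈ S) :
    A f l r ((b :: s).dropLast) ≤ A f l r s + (K - (b :: s).getD (l+r) 0) := by
  have hxlen : (b :: s).length = l + r + 1 := by simp [hs]
  have hx : ∀ q ∈ b :: s, q ∈ S := by
    intro q hq
    rcases List.mem_cons.mp hq with h | h
    · subst h; exact hb
    · exact hsS q h
  have h1 := key1 h0 hl hNC (b :: s) hxlen hx
  have h2 : glob f (cfg (b :: s)) (l:ℤ) ≤ K :=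
    (hSK _ (glob_mem hC (cfg_mem S h0 _ hx) _)).2
  have h4 : (b :: s).tail = s := rfl
  rw [h4] at h1
  linarith

lemma chain_length {w : List ℤ} {c : ℤ} (h : chain S l r f K w c) : w.length = l + r := by
  induction h with
  | base w h₁ _ => exact h₁
  | fwd w c a h ha0 haK ih =>
    simp only [List.length_tail, List.length_append, List.length_singleton]
    omega
  | bwd w c b h hb0 hbK ih =>
    simp only [List.length_dropLast, List.length_cons]
    omega

lemma chain_letters {w : List ℤ} {c : ℤ} (hSK : ∀ s ∈ S, 0 ≤ s ∧ s ≤ K)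
    (h : chain S l r f K w c) : ∀ q ∈ w, 0 ≤ q ∧ q ≤ K := by
  induction h with
  | base w h₁ h₂ => exact h₂
  | fwd w c a h ha0 haK ih =>
    intro q hq
    rcases List.mem_append.mp (List.mem_of_mem_tail hq) with h' | h'
    · exact ih q h'
    · simp at h'; subst h'; exact ⟨ha0, haK⟩
  | bwd w c b h hb0 hbK ih =>
    intro q hq
    rcases List.mem_cons.mp (List.mem_of_mem_dropLast hq) with h' | h'
    · subst h'; exact ⟨hb0, hbK⟩
    · exact ih q h'

lemma chain_nonneg (h0 : (0:ℤ) ∈ S) (hSK : ∀ s ∈ S, 0 ≤ s ∧ s ≤ K) (hC : Closed S f)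
    {w : List ℤ} {c : ℤ} (h : chain S l r f K w c) : 0 ≤ c := by
  induction h with
  | base w h₁ h₂ =>
    have h3 := A_nonneg (l := l) (r := r) h0 hSK hC (w.map (lo S)) (map_lo_mem S h0 w (fun q hq => (h₂ q hq).1))
    have h4 := map_lo_sum_le S h0 w (fun q hq => (h₂ q hq).1)
    linarith
  | fwd w c a h ha0 haK ih => linarith
  | bwd w c b h hb0 hbK ih =>
    have hlen : (b :: w).length = l + r + 1 := by
      simp [chain_length h]
    have hz : (b :: w).getD (l+r) 0 ∈ b :: w := by
      rw [List.getD_eq_getElem _ _ (by omega)]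
      exact List.getElem_mem _
    have hzK : (b :: w).getD (l+r) 0 ≤ K := by
      rcases List.mem_cons.mp hz with h' | h'
      · rw [h']; exact hbK
      · exact (chain_letters hSK h _ h').2
    linarith

/-- The rounding invariant: every chain cost dominates `A` of a canonically
rounded word, plus the stored surpluses. -/
lemma chain_inv (h0 : (0:ℤ) ∈ S) (hK : K ∈ S) (hSK : ∀ s ∈ S, 0 ≤ s ∧ s ≤ K)
    (hl : LocalRule l r f) (hC : Closed S f) (hNC : NC S f)
    {w : List ℤ} {c : ℤ} (h : chain S l r f K w c) :
    ∃ s : List ℤ, s.length = l + r ∧ (∀ q ∈ s, q ∈ S) ∧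
      (∀ i : ℕ, i < l + r → w.getD i 0 ∈ S → s.getD i 0 = w.getD i 0) ∧
      A f l r s + ∑ i ∈ Finset.range (l + r), max (w.getD i 0 - s.getD i 0) 0 ≤ c := by
  induction h with
  | base w h₁ h₂ =>
    refine ⟨w.map (lo S), by simp [h₁], map_lo_mem S h0 w (fun q hq => (h₂ q hq).1), ?_, ?_⟩
    · intro i hi hmem
      rw [getD_map _ _ _ (by omega), lo_fix S _ hmem]
    · have he : ∀ i ∈ Finset.range (l+r),
          max (w.getD i 0 - (w.map (lo S)).getD i 0) 0 = w.getD i 0 - (w.map (lo S)).getD i 0 := by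
        intro i hi
        have hi' : i < w.length := by rw [h₁]; exact Finset.mem_range.mp hi
        rw [getD_map _ _ _ hi']
        have h5 : 0 ≤ w.getD i 0 := by
          rw [List.getD_eq_getElem _ _ hi']
          exact (h₂ _ (List.getElem_mem _)).1
        have h6 := (lo_spec S h0 _ h5).2
        exact max_eq_left (by linarith)
      rw [Finset.sum_congr rfl he, Finset.sum_sub_distrib]
      have h7 : ∑ i ∈ Finset.range (l+r), w.getD i 0 = w.sum := by
        rw [← h₁, sum_getD]
      have h8 : ∑ i ∈ Finset.range (l+r), (w.map (lo S)).getD i 0 = (w.map (lo S)).sum := by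
        rw [show l + r = (w.map (lo S)).length from by simp [h₁], sum_getD]
      rw [h7, h8]
  | fwd w c a h ha0 haK ih =>
    obtain ⟨s, hs1, hs2, hs3, hs4⟩ := ih
    have hwlen : w.length = l + r := chain_length h
    rcases Nat.eq_zero_or_pos (l + r) with hn | hn
    · refine ⟨[], by simp [hn], by simp, by intro i hi; omega, ?_⟩
      have hc0 : 0 ≤ c := chain_nonneg h0 hSK hC h
      have hA0 : A f l r ([] : List ℤ) = 0 := by
        rw [A, hn]; simp
      rw [hn, hA0]
      simp
      linarith
    · obtain ⟨m, hm⟩ : ∃ m, l + r = m + 1 := ⟨l + r - 1, by omega⟩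
      have hwm : w.length = m + 1 := by omega
      have hsm : s.length = m + 1 := by omega
      have hloa := lo_spec S h0 a ha0
      have hwa : ∀ i : ℕ, i < m → ((w ++ [a]).tail).getD i 0 = w.getD (i+1) 0 := by
        intro i hi
        rw [getD_tail, List.getD_append _ _ _ _ (by omega)]
      have hwam : ((w ++ [a]).tail).getD m 0 = a := by
        rw [getD_tail, List.getD_append_right _ _ _ _ (by omega)]
        rw [show m + 1 - w.length = 0 from by omega]
        simp
      have hsa : ∀ i : ℕ, i < m → ((s ++ [lo S a]).tail).getD i 0 = s.getD (i+1) 0 := by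
        intro i hi
        rw [getD_tail, List.getD_append _ _ _ _ (by omega)]
      have hsam : ((s ++ [lo S a]).tail).getD m 0 = lo S a := by
        rw [getD_tail, List.getD_append_right _ _ _ _ (by omega)]
        rw [show m + 1 - s.length = 0 from by omega]
        simp
      refine ⟨(s ++ [lo S a]).tail, ?_, ?_, ?_, ?_⟩
      · simp only [List.length_tail, List.length_append, List.length_singleton]; omega
      · intro q hq
        rcases List.mem_append.mp (List.mem_of_mem_tail hq) with h' | h'
        · exact hs2 q h'
        · simp at h'; subst h'; exact hloa.1
      · intro i hi hmem
        rcases Nat.lt_succ_iff_lt_or_eq.mp (by omega : i < m + 1) with hi' | hi'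
        · rw [hwa i hi'] at hmem
          rw [hsa i hi', hwa i hi']
          exact hs3 (i+1) (by omega) hmem
        · subst hi'
          rw [hwam] at hmem
          rw [hsam, hwam]
          exact lo_fix S a hmem
      · have hE := E1 h0 hSK hl hC hNC s hs1 hs2 (lo S a) hloa.1
        have hB' : ∑ i ∈ Finset.range (l+r),
            max (((w ++ [a]).tail).getD i 0 - ((s ++ [lo S a]).tail).getD i 0) 0
            = (∑ i ∈ Finset.range m, max (w.getD (i+1) 0 - s.getD (i+1) 0) 0) + (a - lo S a) := by
          rw [hm, Finset.sum_range_succ]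
          congr 1
          · refine Finset.sum_congr rfl (fun i hi => ?_)
            rw [hwa i (Finset.mem_range.mp hi), hsa i (Finset.mem_range.mp hi)]
          · rw [hwam, hsam]
            exact max_eq_left (by linarith [hloa.2])
        have hB : ∑ i ∈ Finset.range (l+r), max (w.getD i 0 - s.getD i 0) 0
            = (∑ i ∈ Finset.range m, max (w.getD (i+1) 0 - s.getD (i+1) 0) 0)
              + max (w.getD 0 0 - s.getD 0 0) 0 := by
          rw [hm, Finset.sum_range_succ']
        have hB0 : (0:ℤ) ≤ max (w.getD 0 0 - s.getD 0 0) 0 := le_max_right _ _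
        rw [hB']
        rw [hB] at hs4
        linarith
  | bwd w c b h hb0 hbK ih =>
    obtain ⟨s, hs1, hs2, hs3, hs4⟩ := ih
    have hwlen : w.length = l + r := chain_length h
    rcases Nat.eq_zero_or_pos (l + r) with hn | hn
    · refine ⟨[], by simp [hn], by simp, by intro i hi; omega, ?_⟩
      have hc0 : 0 ≤ c := chain_nonneg h0 hSK hC h
      have hA0 : A f l r ([] : List ℤ) = 0 := by
        rw [A, hn]; simp
      have hz : (b :: w).getD 0 0 = b := List.getD_cons_zero
      rw [hn, hA0, hz]
      simp
      linarith
    · obtain ⟨m, hm⟩ : ∃ m, l + r = m + 1 := ⟨l + r - 1, by omega⟩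
      have hwm : w.length = m + 1 := by omega
      have hsm : s.length = m + 1 := by omega
      have hhib := hi_spec S hK b hbK
      have hw0 : ((b :: w).dropLast).getD 0 0 = b := by
        rw [getD_dropLast _ _ (by simp only [List.length_cons]; omega)]
        exact List.getD_cons_zero
      have hs0 : ((hi S b :: s).dropLast).getD 0 0 = hi S b := by
        rw [getD_dropLast _ _ (by simp only [List.length_cons]; omega)]
        exact List.getD_cons_zero
      have hwi : ∀ i : ℕ, i < m → ((b :: w).dropLast).getD (i+1) 0 = w.getD i 0 := by
        intro i hi
        rw [getD_dropLast _ _ (by simp only [List.length_cons]; omega)]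
        exact List.getD_cons_succ
      have hsi : ∀ i : ℕ, i < m → ((hi S b :: s).dropLast).getD (i+1) 0 = s.getD i 0 := by
        intro i hi
        rw [getD_dropLast _ _ (by simp only [List.length_cons]; omega)]
        exact List.getD_cons_succ
      refine ⟨(hi S b :: s).dropLast, ?_, ?_, ?_, ?_⟩
      · simp only [List.length_dropLast, List.length_cons]; omega
      · intro q hq
        rcases List.mem_cons.mp (List.mem_of_mem_dropLast hq) with h' | h'
        · subst h'; exact hhib.1
        · exact hs2 q h'
      · intro i hi hmem
        cases i with
        | zero =>
          rw [hw0] at hmem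
          rw [hs0, hw0]
          exact hi_fix S b hmem
        | succ i =>
          have him : i < m := by omega
          rw [hwi i him] at hmem
          rw [hsi i him, hwi i him]
          exact hs3 i (by omega) hmem
      · have hE := E2 h0 hSK hl hC hNC s hs1 hs2 (hi S b) hhib.1
        have hzs : (hi S b :: s).getD (l+r) 0 = s.getD m 0 := by
          rw [hm]; exact List.getD_cons_succ
        have hzw : (b :: w).getD (l+r) 0 = w.getD m 0 := by
          rw [hm]; exact List.getD_cons_succ
        have hB' : ∑ i ∈ Finset.range (l+r),
            max (((b :: w).dropLast).getD i 0 - ((hi S b :: s).dropLast).getD i 0) 0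
            = (∑ i ∈ Finset.range m, max (w.getD i 0 - s.getD i 0) 0)
              + max (b - hi S b) 0 := by
          rw [hm, Finset.sum_range_succ']
          congr 1
          · refine Finset.sum_congr rfl (fun i hi => ?_)
            rw [hwi i (Finset.mem_range.mp hi), hsi i (Finset.mem_range.mp hi)]
          · rw [hw0, hs0]
        have hmax0 : max (b - hi S b) 0 = 0 := max_eq_right (by linarith [hhib.2])
        have hBsplit : ∑ i ∈ Finset.range (l+r), max (w.getD i 0 - s.getD i 0) 0
            = (∑ i ∈ Finset.range m, max (w.getD i 0 - s.getD i 0) 0)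
              + max (w.getD m 0 - s.getD m 0) 0 := by
          rw [hm, Finset.sum_range_succ]
        have hBm : w.getD m 0 - s.getD m 0 ≤ max (w.getD m 0 - s.getD m 0) 0 := le_max_left _ _
        rw [hB', hmax0, add_zero, hzw]
        rw [hBsplit] at hs4
        rw [hzs] at hE
        linarith

lemma chainSet_bdd (h0 : (0:ℤ) ∈ S) (hSK : ∀ s ∈ S, 0 ≤ s ∧ s ≤ K) (hC : Closed S f)
    (w : List ℤ) : BddBelow {c | chain S l r f K w c} :=
  ⟨0, fun c hc => chain_nonneg h0 hSK hC hc⟩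

lemma Phi_le (h0 : (0:ℤ) ∈ S) (hSK : ∀ s ∈ S, 0 ≤ s ∧ s ≤ K) (hC : Closed S f)
    {w : List ℤ} {c : ℤ} (hch : chain S l r f K w c) : Phi S l r f K w ≤ c :=
  csInf_le (chainSet_bdd h0 hSK hC w) hch

lemma Phi_chain (h0 : (0:ℤ) ∈ S) (hSK : ∀ s ∈ S, 0 ≤ s ∧ s ≤ K) (hC : Closed S f)
    (w : List ℤ) (hwlen : w.length = l + r) (hw : ∀ q ∈ w, 0 ≤ q ∧ q ≤ K) :
    chain S l r f K w (Phi S l r f K w) :=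
  Int.csInf_mem ⟨_, chain.base w hwlen hw⟩ (chainSet_bdd h0 hSK hC w)

lemma Phi_eq_A (h0 : (0:ℤ) ∈ S) (hK : K ∈ S) (hSK : ∀ s ∈ S, 0 ≤ s ∧ s ≤ K)
    (hl : LocalRule l r f) (hC : Closed S f) (hNC : NC S f)
    (v : List ℤ) (hvlen : v.length = l + r) (hvS : ∀ q ∈ v, q ∈ S) :
    Phi S l r f K v = A f l r v := by
  apply le_antisymm
  · have hb := chain.base (S := S) (l := l) (r := r) (f := f) (K := K) v hvlen
      (fun q hq => hSK q (hvS q hq))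
    rw [map_lo_id S v hvS, sub_self, add_zero] at hb
    exact Phi_le h0 hSK hC hb
  · refine le_csInf ⟨_, chain.base v hvlen (fun q hq => hSK q (hvS q hq))⟩ (fun c hc => ?_)
    obtain ⟨s, hs1, hs2, hs3, hs4⟩ := chain_inv h0 hK hSK hl hC hNC hc
    have hsv : s = v := by
      refine List.ext_getElem (by omega) (fun i hi1 hi2 => ?_)
      have h5 := hs3 i (by omega) (by
        rw [List.getD_eq_getElem _ _ hi2]
        exact hvS _ (List.getElem_mem hi2))
      rw [List.getD_eq_getElem _ _ hi1, List.getD_eq_getElem _ _ hi2] at h5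
      exact h5
    rw [hsv] at hs4
    simp only [sub_self, max_self, Finset.sum_const_zero, add_zero] at hs4
    linarith

lemma Phi_fwd (h0 : (0:ℤ) ∈ S) (hSK : ∀ s ∈ S, 0 ≤ s ∧ s ≤ K) (hC : Closed S f)
    (w : List ℤ) (hwlen : w.length = l + r) (hw : ∀ q ∈ w, 0 ≤ q ∧ q ≤ K)
    (a : ℤ) (ha0 : 0 ≤ a) (haK : a ≤ K) :
    Phi S l r f K ((w ++ [a]).tail) ≤ Phi S l r f K w + a :=
  Phi_le h0 hSK hC (chain.fwd w _ a (Phi_chain h0 hSK hC w hwlen hw) ha0 haK)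

lemma Phi_bwd (h0 : (0:ℤ) ∈ S) (hSK : ∀ s ∈ S, 0 ≤ s ∧ s ≤ K) (hC : Closed S f)
    (w : List ℤ) (hwlen : w.length = l + r) (hw : ∀ q ∈ w, 0 ≤ q ∧ q ≤ K)
    (b : ℤ) (hb0 : 0 ≤ b) (hbK : b ≤ K) :
    Phi S l r f K ((b :: w).dropLast) ≤ Phi S l r f K w + (K - (b :: w).getD (l + r) 0) :=
  Phi_le h0 hSK hC (chain.bwd w _ b (Phi_chain h0 hSK hC w hwlen hw) hb0 hbK)

lemma Phi_x_right (h0 : (0:ℤ) ∈ S) (hSK : ∀ s ∈ S, 0 ≤ s ∧ s ≤ K) (hC : Closed S f)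
    (x : List ℤ) (hxlen : x.length = l + r + 1) (hx : ∀ q ∈ x, 0 ≤ q ∧ q ≤ K) :
    Phi S l r f K x.tail ≤ Phi S l r f K x.dropLast + x.getD (l+r) 0 := by
  have hne : x ≠ [] := by intro h; rw [h] at hxlen; simp at hxlen
  have hlen1 : x.length - 1 = l + r := by omega
  have h2 : x.dropLast ++ [x.getD (l+r) 0] = x := by
    have := concat_getD x hne
    rwa [hlen1] at this
  have hdl_len : x.dropLast.length = l + r := by rw [List.length_dropLast]; omega
  have hzx : x.getD (l+r) 0 ∈ x := by
    rw [List.getD_eq_getElem _ _ (by omega)]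
    exact List.getElem_mem _
  have h3 := Phi_fwd h0 hSK hC x.dropLast hdl_len
    (fun q hq => hx q (List.mem_of_mem_dropLast hq)) (x.getD (l+r) 0)
    (hx _ hzx).1 (hx _ hzx).2
  rwa [h2] at h3

lemma Phi_x_left (h0 : (0:ℤ) ∈ S) (hSK : ∀ s ∈ S, 0 ≤ s ∧ s ≤ K) (hC : Closed S f)
    (x : List ℤ) (hxlen : x.length = l + r + 1) (hx : ∀ q ∈ x, 0 ≤ q ∧ q ≤ K) :
    Phi S l r f K x.dropLast ≤ Phi S l r f K x.tail + (K - x.getD (l+r) 0) := by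
  have hne : x ≠ [] := by intro h; rw [h] at hxlen; simp at hxlen
  have htl_len : x.tail.length = l + r := by rw [List.length_tail]; omega
  have hhx : x.getD 0 0 ∈ x := by
    rw [List.getD_eq_getElem _ _ (by omega)]
    exact List.getElem_mem _
  have h3 := Phi_bwd h0 hSK hC x.tail htl_len
    (fun q hq => hx q (List.mem_of_mem_tail hq)) (x.getD 0 0)
    (hx _ hhx).1 (hx _ hhx).2
  rwa [head_getD_tail x hne] at h3

end Ext

/-! ### The extended rule `g` -/

def clamp (K q : ℤ) : ℤ := max 0 (min q K)

lemma clamp_bounds (K : ℤ) (hK0 : 0 ≤ K) (q : ℤ) : 0 ≤ clamp K q ∧ clamp K q ≤ K :=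
  ⟨le_max_left _ _, max_le hK0 (min_le_right _ _)⟩

lemma clamp_id (K q : ℤ) (h1 : 0 ≤ q) (h2 : q ≤ K) : clamp K q = q := by
  rw [clamp, min_eq_left h2, max_eq_right h1]

def win (l r : ℕ) (K : ℤ) (c : ℤ → ℤ) : List ℤ :=
  (List.range (l + r)).map fun i : ℕ => clamp K (c (-(l:ℤ) + (i:ℤ)))

def xwin (l r : ℕ) (K : ℤ) (c : ℤ → ℤ) : List ℤ :=
  (List.range (l + r + 1)).map fun i : ℕ => clamp K (c (-(l:ℤ) + (i:ℤ)))

noncomputable def g (S : Finset ℤ) (l r : ℕ) (f : (ℤ → ℤ) → ℤ) (K : ℤ) (c : ℤ → ℤ) : ℤ :=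
  clamp K (c (r:ℤ)) + Phi S l r f K (win l r K c) - Phi S l r f K (win l r K (fun j => c (j + 1)))

section G

variable {S : Finset ℤ} {l r : ℕ} {f : (ℤ → ℤ) → ℤ} {K : ℤ}

lemma xwin_length (c : ℤ → ℤ) : (xwin l r K c).length = l + r + 1 := by simp [xwin]

lemma win_length (c : ℤ → ℤ) : (win l r K c).length = l + r := by simp [win]

lemma xwin_dropLast (c : ℤ → ℤ) : (xwin l r K c).dropLast = win l r K c := by
  have hr : List.range (l + r + 1) = List.range (l + r) ++ [l + r] := by
    have h := List.range_succ (n := l + r)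
    rwa [Nat.succ_eq_add_one] at h
  rw [xwin, win, hr, List.map_append]
  simp

lemma xwin_tail (c : ℤ → ℤ) : (xwin l r K c).tail = win l r K (fun j => c (j + 1)) := by
  rw [xwin, List.range_succ_eq_map, List.map_cons, List.tail_cons, List.map_map, win]
  refine List.map_congr_left (fun i _ => ?_)
  show clamp K (c (-(l:ℤ) + ((i+1 : ℕ) : ℤ))) = clamp K (c ((-(l:ℤ) + (i:ℤ)) + 1))
  exact congrArg (fun z => clamp K (c z)) (by push_cast; ring)

lemma xwin_getD (c : ℤ → ℤ) : (xwin l r K c).getD (l + r) 0 = clamp K (c (r:ℤ)) := by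
  rw [xwin, getD_map_range _ _ _ (by omega)]
  exact congrArg (fun z => clamp K (c z)) (by push_cast; ring)

lemma xwin_letters (hK0 : 0 ≤ K) (c : ℤ → ℤ) : ∀ q ∈ xwin l r K c, 0 ≤ q ∧ q ≤ K := by
  intro q hq
  obtain ⟨i, _, rfl⟩ := List.mem_map.mp hq
  exact clamp_bounds K hK0 _

lemma g_local : LocalRule l (r + (l + r + 1)) (g S l r f K) := by
  intro c d h
  have h1 : c (r:ℤ) = d (r:ℤ) := h (r:ℤ) (by push_cast; omega) (by push_cast; omega)
  have h2 : win l r K c = win l r K d := by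
    refine List.map_congr_left (fun i hi => ?_)
    have hi' : i < l + r := List.mem_range.mp hi
    rw [h (-(l:ℤ) + (i:ℤ)) (by push_cast; omega) (by push_cast; omega)]
  have h3 : win l r K (fun j => c (j + 1)) = win l r K (fun j => d (j + 1)) := by
    refine List.map_congr_left (fun i hi => ?_)
    have hi' : i < l + r := List.mem_range.mp hi
    show clamp K (c ((-(l:ℤ) + (i:ℤ)) + 1)) = clamp K (d ((-(l:ℤ) + (i:ℤ)) + 1))
    rw [h (-(l:ℤ) + (i:ℤ) + 1) (by push_cast; omega) (by push_cast; omega)]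
  rw [g, g, h1, h2, h3]

lemma g_bounds (h0 : (0:ℤ) ∈ S) (hSK : ∀ s ∈ S, 0 ≤ s ∧ s ≤ K) (hC : Closed S f)
    (c : ℤ → ℤ) : 0 ≤ g S l r f K c ∧ g S l r f K c ≤ K := by
  have hK0 : 0 ≤ K := (hSK 0 h0).2
  have hxlen : (xwin l r K c).length = l + r + 1 := xwin_length c
  have hx : ∀ q ∈ xwin l r K c, 0 ≤ q ∧ q ≤ K := xwin_letters hK0 c
  have hR := Phi_x_right h0 hSK hC (xwin l r K c) hxlen hx
  have hL := Phi_x_left h0 hSK hC (xwin l r K c) hxlen hx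
  rw [xwin_dropLast, xwin_tail, xwin_getD] at hR hL
  rw [g]
  constructor <;> linarith

lemma g_closed (h0 : (0:ℤ) ∈ S) (hSK : ∀ s ∈ S, 0 ≤ s ∧ s ≤ K) (hC : Closed S f) :
    Closed (Finset.Icc 0 K) (g S l r f K) := by
  intro c _
  rw [Finset.mem_Icc]
  exact g_bounds h0 hSK hC c

/-- On `S`-configurations, `g` acts exactly as `f`. -/
lemma g_eq_f (h0 : (0:ℤ) ∈ S) (hK : K ∈ S) (hSK : ∀ s ∈ S, 0 ≤ s ∧ s ≤ K)
    (hl : LocalRule l r f) (hC : Closed S f) (hNC : NC S f)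
    (d : ℤ → ℤ) (hd : Config S d) (i : ℤ) :
    glob (g S l r f K) d i = glob f d i := by
  have hdb : ∀ j : ℤ, 0 ≤ d j ∧ d j ≤ K := fun j => hSK _ (hd j)
  have hgl : glob (g S l r f K) d i = g S l r f K (fun j => d (i + j)) := rfl
  set c' : ℤ → ℤ := fun j => d (i + j) with hc'
  have hclampc' : ∀ z : ℤ, clamp K (c' z) = d (i + z) := by
    intro z
    rw [hc']
    exact clamp_id K _ (hdb _).1 (hdb _).2
  have hxlen : (xwin l r K c').length = l + r + 1 := xwin_length c'
  have hxS : ∀ q ∈ xwin l r K c', q ∈ S := by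
    intro q hq
    obtain ⟨t, _, rfl⟩ := List.mem_map.mp hq
    rw [hclampc']
    exact hd _
  have hkey := key1 h0 hl hNC (xwin l r K c') hxlen hxS
  have hgx : glob f (cfg (xwin l r K c')) (l:ℤ) = glob f d i := by
    refine glob_congr hl (fun t ht1 ht2 => ?_)
    have hq0 : (0:ℤ) ≤ (l:ℤ) + t := by omega
    have htn : ((l:ℤ)+t).toNat < l + r + 1 := by omega
    have h7 : ((((l:ℤ)+t).toNat : ℕ) : ℤ) = (l:ℤ) + t := Int.toNat_of_nonneg hq0
    rw [cfg_nonneg _ _ hq0, xwin, getD_map_range _ _ _ htn]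
    rw [show -(l:ℤ) + ((((l:ℤ)+t).toNat : ℕ) : ℤ) = t from by rw [h7]; ring]
    exact hclampc' t
  have hdl : (xwin l r K c').dropLast = win l r K c' := xwin_dropLast c'
  have htl : (xwin l r K c').tail = win l r K (fun j => c' (j + 1)) := xwin_tail c'
  have hPL : Phi S l r f K (win l r K c') = A f l r ((xwin l r K c').dropLast) := by
    rw [hdl]
    exact Phi_eq_A h0 hK hSK hl hC hNC _ (by rw [← hdl, List.length_dropLast, hxlen]; omega)
      (fun q hq => hxS q (by rw [← hdl] at hq; exact List.mem_of_mem_dropLast hq))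
  have hPR : Phi S l r f K (win l r K (fun j => c' (j + 1))) = A f l r ((xwin l r K c').tail) := by
    rw [← htl]
    exact Phi_eq_A h0 hK hSK hl hC hNC _ (by rw [List.length_tail, hxlen]; omega)
      (fun q hq => hxS q (List.mem_of_mem_tail hq))
  have hcl : clamp K (c' (r:ℤ)) = (xwin l r K c').getD (l+r) 0 := (xwin_getD c').symm
  rw [hgl, g, hPL, hPR, hcl, ← hkey]
  exact hgx

lemma g_NC (h0 : (0:ℤ) ∈ S) (hSK : ∀ s ∈ S, 0 ≤ s ∧ s ≤ K) (hC : Closed S f) :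
    NC (Finset.Icc 0 K) (g S l r f K) := by
  intro c hc p hp hper
  have hcb : ∀ j : ℤ, 0 ≤ c j ∧ c j ≤ K := by
    intro j
    have := hc j
    rwa [Finset.mem_Icc] at this
  have hterm : ∀ k ∈ Finset.range p, glob (g S l r f K) c (k:ℤ)
      = c ((k:ℤ) + (r:ℤ)) + (Phi S l r f K (win l r K (fun j => c ((k:ℤ) + j)))
        - Phi S l r f K (win l r K (fun j => c (((k+1:ℕ):ℤ) + j)))) := by
    intro k _
    have hgk : glob (g S l r f K) c (k:ℤ) = g S l r f K (fun j => c ((k:ℤ) + j)) := rfl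
    rw [hgk, g]
    have hclamp : clamp K (c ((k:ℤ) + (r:ℤ))) = c ((k:ℤ) + (r:ℤ)) :=
      clamp_id K _ (hcb _).1 (hcb _).2
    have hW : win l r K (fun j => c ((k:ℤ) + (j + 1)))
        = win l r K (fun j => c (((k+1:ℕ):ℤ) + j)) := by
      refine List.map_congr_left (fun i _ => ?_)
      show clamp K (c ((k:ℤ) + ((-(l:ℤ) + (i:ℤ)) + 1)))
        = clamp K (c (((k+1:ℕ):ℤ) + (-(l:ℤ) + (i:ℤ))))
      exact congrArg (fun z => clamp K (c z)) (by push_cast; ring)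
    rw [hclamp, hW]
    ring
  rw [Finset.sum_congr rfl hterm, Finset.sum_add_distrib,
    per_sum_shift p c hper (r:ℤ),
    Finset.sum_range_sub' (fun k => Phi S l r f K (win l r K (fun j => c ((k:ℤ) + j)))) p]
  have hWp : win l r K (fun j => c ((p:ℤ) + j)) = win l r K (fun j => c (((0:ℕ):ℤ) + j)) := by
    refine List.map_congr_left (fun i _ => ?_)
    show clamp K (c ((p:ℤ) + (-(l:ℤ) + (i:ℤ)))) = clamp K (c (((0:ℕ):ℤ) + (-(l:ℤ) + (i:ℤ))))
    rw [show (p:ℤ) + (-(l:ℤ) + (i:ℤ)) = (-(l:ℤ) + (i:ℤ)) + (p:ℤ) from by ring, hper]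
    norm_num
  rw [hWp, sub_self, add_zero]

end G

end NCExt


theorem extension_to_interval_states
    (S : Finset ℤ) (hne : S.Nonempty) (l r : ℕ) (f : (ℤ → ℤ) → ℤ)
    (hl : LocalRule l r f) (hC : Closed S f) (hNC : NC S f) :
    ∃ (l' r' : ℕ) (g : (ℤ → ℤ) → ℤ) (φ : ℤ → ℤ),
      l' + r' + 1 = 2 * (l + r + 1) ∧
      LocalRule l' r' g ∧
      Closed (Finset.Icc 0 (S.max' hne - S.min' hne)) g ∧
      NC (Finset.Icc 0 (S.max' hne - S.min' hne)) g ∧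
      Set.InjOn φ (S : Set ℤ) ∧
      (∀ s ∈ S, φ s ∈ Finset.Icc (0 : ℤ) (S.max' hne - S.min' hne)) ∧
      (∀ c : ℤ → ℤ, Config S c → ∀ i : ℤ, φ (glob f c i) = glob g (fun j => φ (c j)) i) := by
  classical
  set m : ℤ := S.min' hne with hm
  set M : ℤ := S.max' hne with hM
  set S' : Finset ℤ := S.image (fun s => s - m) with hS'
  set f' : (ℤ → ℤ) → ℤ := fun c => f (fun j => c j + m) - m with hf'
  have h0' : (0:ℤ) ∈ S' := Finset.mem_image.mpr ⟨m, S.min'_mem hne, sub_self m⟩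
  have hK' : M - m ∈ S' := Finset.mem_image.mpr ⟨M, S.max'_mem hne, rfl⟩
  have hSK' : ∀ s ∈ S', 0 ≤ s ∧ s ≤ M - m := by
    intro s hs
    obtain ⟨t, ht, rfl⟩ := Finset.mem_image.mp hs
    have h1 := S.min'_le t ht
    have h2 := S.le_max' t ht
    rw [← hm] at h1
    rw [← hM] at h2
    omega
  have hmemS : ∀ (c : ℤ → ℤ), Config S' c → Config S (fun j => c j + m) := by
    intro c hc j
    obtain ⟨t, ht, hte⟩ := Finset.mem_image.mp (hc j)
    have h3 : c j + m = t := by omega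
    show c j + m ∈ S
    rw [h3]
    exact ht
  have hl' : LocalRule l r f' := by
    intro c d h
    show f (fun j => c j + m) - m = f (fun j => d j + m) - m
    rw [hl (fun j => c j + m) (fun j => d j + m) (fun j h1 h2 => by show c j + m = d j + m; rw [h j h1 h2])]
  have hC' : Closed S' f' := by
    intro c hc
    exact Finset.mem_image.mpr ⟨f (fun j => c j + m), hC _ (hmemS c hc), rfl⟩
  have hNC' : NC S' f' := by
    intro c hc p hp hper
    have hper2 : Per p (fun j => c j + m) := fun i => by simp only; rw [hper]
    have h2 := hNC _ (hmemS c hc) p hp hper2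
    have e1 : ∑ k ∈ Finset.range p, glob f' c (k:ℤ)
        = ∑ k ∈ Finset.range p, (glob f (fun j => c j + m) (k:ℤ) - m) := rfl
    have e2 : ∑ k ∈ Finset.range p, (glob f (fun j => c j + m) (k:ℤ) - m)
        = (∑ k ∈ Finset.range p, glob f (fun j => c j + m) (k:ℤ)) - (p:ℤ) * m := by
      rw [Finset.sum_sub_distrib, Finset.sum_const, Finset.card_range, nsmul_eq_mul]
    have e3 : ∑ k ∈ Finset.range p, ((c (k:ℤ)) + m)
        = (∑ k ∈ Finset.range p, c (k:ℤ)) + (p:ℤ) * m := by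
      rw [Finset.sum_add_distrib, Finset.sum_const, Finset.card_range, nsmul_eq_mul]
    rw [e1, e2, h2, e3]
    ring
  refine ⟨l, r + (l + r + 1), NCExt.g S' l r f' (M - m), fun s => s - m,
    by omega, NCExt.g_local, NCExt.g_closed h0' hSK' hC', NCExt.g_NC h0' hSK' hC',
    ?_, ?_, ?_⟩
  · intro a _ b _ hab
    simp only at hab
    omega
  · intro s hs
    rw [Finset.mem_Icc]
    exact hSK' _ (Finset.mem_image.mpr ⟨s, hs, rfl⟩)
  · intro c hc i
    have hc' : Config S' (fun j => c j - m) := fun j => Finset.mem_image.mpr ⟨c j, hc j, rfl⟩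
    show glob f c i - m = glob (NCExt.g S' l r f' (M - m)) (fun j => c j - m) i
    rw [NCExt.g_eq_f h0' hK' hSK' hl' hC' hNC' _ hc' i]
    show f (fun j => c (i + j)) - m = f (fun j => (c (i + j) - m) + m) - m
    have he : (fun j => (c (i + j) - m) + m) = fun j => c (i + j) := funext fun j => by ring
    rw [he]
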